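/- Let F be a field with a valuation v : F → Γ₀ into a linearly ordered commutative group with zero, and let π ∈ F satisfy v(π) > 1. Let g ∈ SL₂(F) have entries g = [[x, y], [z, w]] (so xw − yz = 1). Then g lies in the double coset I · D · I, where D = [[π, 0], [0, π⁻¹]] and I is the Iwahori subgroup, if and only if v(x) = v(π), v(y) ≤ v(π), v(z) < v(π), and v(w) ≤ v(π). -/

import Mathlib

/-- Membership in the Iwahori subgroup of `SL₂` of a valued field: a matrix of determinant `1`,
entries of valuation at most `1`, and lower-left entry of valuation strictly less than `1`
(i.e. a matrix over the valuation ring whose residue is upper triangular). -/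
def IwahoriMem {F Γ₀ : Type*} [Field F] [LinearOrderedCommGroupWithZero Γ₀]
    (v : Valuation F Γ₀) (m : Matrix (Fin 2) (Fin 2) F) : Prop :=
  m.det = 1 ∧ v (m 0 0) ≤ 1 ∧ v (m 0 1) ≤ 1 ∧ v (m 1 0) < 1 ∧ v (m 1 1) ≤ 1

/-- Let `g = [[x, y], [z, w]] ∈ SL₂(F)` and `v(π) > 1`.  Then `g ∈ I · [[π, 0], [0, π⁻¹]] · I`
iff `v(x) = v(π)`, `v(y) ≤ v(π)`, `v(z) < v(π)` and `v(w) ≤ v(π)`. -/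
theorem mem_iwahori_double_coset_diag_iff
    {F Γ₀ : Type*} [Field F] [LinearOrderedCommGroupWithZero Γ₀]
    (v : Valuation F Γ₀) (π : F) (hπ : 1 < v π)
    (x y z w : F) (hdet : x * w - y * z = 1) :
    (∃ i₁ i₂ : Matrix (Fin 2) (Fin 2) F, IwahoriMem v i₁ ∧ IwahoriMem v i₂ ∧
        !![x, y; z, w] = i₁ * !![π, 0; 0, π⁻¹] * i₂) ↔
      v x = v π ∧ v y ≤ v π ∧ v z < v π ∧ v w ≤ v π := by
  have hπpos : (0 : Γ₀) < v π := zero_lt_one.trans hπ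
  have hπ0 : π ≠ 0 := fun h => by simp [h] at hπpos
  constructor
  · rintro ⟨i₁, i₂, ⟨h1, ha, hb, hc, hd⟩, ⟨h2, ha', hb', hc', hd'⟩, heq⟩
    rw [Matrix.det_fin_two] at h1 h2
    set a := i₁ 0 0; set b := i₁ 0 1; set c := i₁ 1 0; set d := i₁ 1 1
    set a' := i₂ 0 0; set b' := i₂ 0 1; set c' := i₂ 1 0; set d' := i₂ 1 1
    have hx : x = a * π * a' + b * π⁻¹ * c' := by
      have := congrFun (congrFun heq 0) 0
      simp [Matrix.mul_apply, Fin.sum_univ_two] at this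
      linear_combination this
    have hy : y = a * π * b' + b * π⁻¹ * d' := by
      have := congrFun (congrFun heq 0) 1
      simp [Matrix.mul_apply, Fin.sum_univ_two] at this
      linear_combination this
    have hz : z = c * π * a' + d * π⁻¹ * c' := by
      have := congrFun (congrFun heq 1) 0
      simp [Matrix.mul_apply, Fin.sum_univ_two] at this
      linear_combination this
    have hw : w = c * π * b' + d * π⁻¹ * d' := by
      have := congrFun (congrFun heq 1) 1
      simp [Matrix.mul_apply, Fin.sum_univ_two] at this
      linear_combination this
    have hinv : v π⁻¹ = (v π)⁻¹ := map_inv₀ v π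
    have hπinv : v π⁻¹ < 1 := by rw [hinv]; exact inv_lt_one_of_one_lt₀ hπ
    -- v a = v d = 1 and similarly for primes
    have key : ∀ A B C D : F, A * D - B * C = 1 → v B ≤ 1 → v C < 1 →
        v A ≤ 1 → v D ≤ 1 → v A = 1 ∧ v D = 1 := by
      intro A B C D hABCD hB hC hA hD
      have h1 : v (A * D) = 1 := by
        have : A * D = 1 + B * C := by linear_combination hABCD
        rw [this, v.map_add_eq_of_lt_left, v.map_one]
        rw [v.map_one, v.map_mul]
        calc v B * v C ≤ 1 * v C := mul_le_mul_left hB _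
          _ = v C := one_mul _
          _ < 1 := hC
      rw [v.map_mul] at h1
      constructor
      · refine le_antisymm hA ?_
        calc (1:Γ₀) = v A * v D := h1.symm
          _ ≤ v A * 1 := mul_le_mul_right hD _
          _ = v A := mul_one _
      · refine le_antisymm hD ?_
        calc (1:Γ₀) = v A * v D := h1.symm
          _ ≤ 1 * v D := mul_le_mul_left hA _
          _ = v D := one_mul _
    obtain ⟨hva, hvd⟩ := key a b c d h1 hb hc ha hd
    obtain ⟨hva', hvd'⟩ := key a' b' c' d' h2 hb' hc' ha' hd'
    refine ⟨?_, ?_, ?_, ?_⟩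
    · have hA : v (a * π * a') = v π := by
        rw [v.map_mul, v.map_mul, hva, hva', one_mul, mul_one]
      rw [hx, v.map_add_eq_of_lt_left]
      · exact hA
      · rw [hA, v.map_mul, v.map_mul]
        calc v b * v π⁻¹ * v c' ≤ 1 * v π⁻¹ * 1 :=
              mul_le_mul' (mul_le_mul_left hb _) hc'.le
          _ = v π⁻¹ := by rw [one_mul, mul_one]
          _ < 1 := hπinv
          _ < v π := hπ
    · rw [hy]
      refine le_trans (v.map_add _ _) (max_le ?_ ?_)
      · rw [v.map_mul, v.map_mul, hva, one_mul]
        calc v π * v b' ≤ v π * 1 := mul_le_mul_right hb' _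
          _ = v π := mul_one _
      · rw [v.map_mul, v.map_mul]
        calc v b * v π⁻¹ * v d' ≤ 1 * v π⁻¹ * 1 :=
              mul_le_mul' (mul_le_mul_left hb _) hd'
          _ = v π⁻¹ := by rw [one_mul, mul_one]
          _ ≤ 1 := hπinv.le
          _ ≤ v π := hπ.le
    · rw [hz]
      refine lt_of_le_of_lt (v.map_add _ _) (max_lt ?_ ?_)
      · rw [v.map_mul, v.map_mul, hva', mul_one]
        calc v c * v π = v π * v c := mul_comm _ _
          _ < v π * 1 := mul_lt_mul_of_pos_left hc hπpos
          _ = v π := mul_one _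
      · rw [v.map_mul, v.map_mul, hvd, one_mul]
        calc v π⁻¹ * v c' ≤ v π⁻¹ * 1 := mul_le_mul_right hc'.le _
          _ = v π⁻¹ := mul_one _
          _ < 1 := hπinv
          _ < v π := hπ
    · rw [hw]
      refine le_trans (v.map_add _ _) (max_le ?_ ?_)
      · rw [v.map_mul, v.map_mul]
        calc v c * v π * v b' ≤ 1 * v π * 1 :=
              mul_le_mul' (mul_le_mul_left hc.le _) hb'
          _ = v π := by rw [one_mul, mul_one]
      · rw [v.map_mul, v.map_mul]
        calc v d * v π⁻¹ * v d' ≤ 1 * v π⁻¹ * 1 :=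
              mul_le_mul' (mul_le_mul_left hd _) hd'
          _ = v π⁻¹ := by rw [one_mul, mul_one]
          _ ≤ 1 := hπinv.le
          _ ≤ v π := hπ.le
  · rintro ⟨hx, hy, hz, hw⟩
    have hx0 : x ≠ 0 := by
      intro h
      rw [h, v.map_zero] at hx
      exact hπpos.ne hx
    refine ⟨!![1, 0; z / x, 1], !![x / π, y / π; 0, π / x], ?_, ?_, ?_⟩
    · refine ⟨by norm_num [Matrix.det_fin_two_of], by simp, by simp, ?_, by simp⟩
      have h10 : (!![1, 0; z / x, 1] : Matrix (Fin 2) (Fin 2) F) 1 0 = z / x := by simp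
      rw [h10, map_div₀, div_lt_iff₀ (by rw [hx]; exact hπpos), one_mul, hx]
      exact hz
    · have h00 : (!![x / π, y / π; 0, π / x] : Matrix (Fin 2) (Fin 2) F) 0 0 = x / π := by simp
      have h01 : (!![x / π, y / π; 0, π / x] : Matrix (Fin 2) (Fin 2) F) 0 1 = y / π := by simp
      have h10 : (!![x / π, y / π; 0, π / x] : Matrix (Fin 2) (Fin 2) F) 1 0 = 0 := by simp
      have h11 : (!![x / π, y / π; 0, π / x] : Matrix (Fin 2) (Fin 2) F) 1 1 = π / x := by simp
      refine ⟨?_, ?_, ?_, ?_, ?_⟩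
      · rw [Matrix.det_fin_two, h00, h01, h10, h11]
        field_simp
        simp
      · rw [h00, map_div₀, hx, div_self hπpos.ne']
      · rw [h01, map_div₀, div_le_one₀ hπpos]; exact hy
      · rw [h10, v.map_zero]; exact zero_lt_one
      · rw [h11, map_div₀, hx, div_self hπpos.ne']
    · ext i j
      fin_cases i <;> fin_cases j <;>
        simp [Matrix.mul_apply, Fin.sum_univ_two]
      · field_simp
      · field_simp
      · field_simp
      · field_simp
        linear_combination hdet
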